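/- Let n ≥ 1 and let V be an n-dimensional 𝕁-isotropic complex subspace of ℂ^(2n+1). Then there exist vectors v_1, …, v_n forming a basis of V, and vectors w_1, …, w_n, u in ℂ^(2n+1), such that (v_1, …, v_n, w_1, …, w_n, u) is a basis of ℂ^(2n+1) and h(v_i, v_j) = 0, h(v_i, w_j) = δ_ij, h(w_i, w_j) = 0, h(v_i, u) = 0, h(w_i, u) = 0, and h(u, u) = 1 for all 1 ≤ i, j ≤ n. -/

import Mathlib

open Matrix

noncomputable section

/-- Index type for `ℂ^(2n+1)`: `Fin n ⊕ Fin 1 ⊕ Fin n`. -/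
abbrev Idx (n : ℕ) := Fin n ⊕ Fin 1 ⊕ Fin n

/-- The Hermitian matrix `𝕁` whose 3×3 block form has the `n×n` identity in blocks
(1,3) and (3,1), the entry `1` in the middle (2,2) position, and zeros elsewhere. -/
def Jmat (n : ℕ) : Matrix (Idx n) (Idx n) ℂ :=
  Matrix.of fun i j =>
    match i, j with
    | Sum.inl a, Sum.inr (Sum.inr b) => if a = b then 1 else 0
    | Sum.inr (Sum.inr a), Sum.inl b => if a = b then 1 else 0
    | Sum.inr (Sum.inl _), Sum.inr (Sum.inl _) => 1
    | _, _ => 0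

/-- The Hermitian form `h(x,y) = (star x) ⬝ᵥ (𝕁 *ᵥ y)`, conjugate-linear in the
first argument. -/
def hform {n : ℕ} (x y : Idx n → ℂ) : ℂ := star x ⬝ᵥ (Jmat n *ᵥ y)

/-- A subspace `V ⊆ ℂ^(2n+1)` is `𝕁`-isotropic if `h(x,y) = 0` for all `x, y ∈ V`. -/
def IsIsotropic {n : ℕ} (V : Submodule ℂ (Idx n → ℂ)) : Prop :=
  ∀ x ∈ V, ∀ y ∈ V, hform x y = 0

def sw {n : ℕ} : Idx n → Idx n :=
  Sum.elim (fun a => Sum.inr (Sum.inr a)) (Sum.elim (fun b => Sum.inr (Sum.inl b)) Sum.inl)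

lemma sw_sw {n : ℕ} (k : Idx n) : sw (sw k) = k := by
  rcases k with a | b | c <;> simp [sw]

def swEquiv {n : ℕ} : Equiv (Idx n) (Idx n) :=
  ⟨sw, sw, fun k => sw_sw k, fun k => sw_sw k⟩

lemma Jmat_mulVec {n : ℕ} (y : Idx n → ℂ) : Jmat n *ᵥ y = y ∘ sw := by
  ext k
  rcases k with a | b | c <;>
    simp [Jmat, mulVec, dotProduct, Fintype.sum_sum_type, sw, Fin.fin_one_eq_zero]

lemma hform_apply {n : ℕ} (x y : Idx n → ℂ) :
    hform x y = ∑ k, (starRingEnd ℂ) (x k) * y (sw k) := by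
  simp [hform, Jmat_mulVec, dotProduct]

lemma hform_conj {n : ℕ} (x y : Idx n → ℂ) :
    (starRingEnd ℂ) (hform x y) = hform y x := by
  rw [hform_apply, hform_apply, map_sum]
  rw [← Equiv.sum_comp (swEquiv (n := n)) (fun k => (starRingEnd ℂ) (y k) * x (sw k))]
  apply Finset.sum_congr rfl
  intro k _
  simp [swEquiv, sw_sw, mul_comm]

lemma hform_add_left {n : ℕ} (x x' y : Idx n → ℂ) :
    hform (x + x') y = hform x y + hform x' y := by
  simp [hform_apply, Finset.sum_add_distrib, add_mul]

lemma hform_add_right {n : ℕ} (x y y' : Idx n → ℂ) :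
    hform x (y + y') = hform x y + hform x y' := by
  simp [hform_apply, Finset.sum_add_distrib, mul_add]

lemma hform_smul_left {n : ℕ} (c : ℂ) (x y : Idx n → ℂ) :
    hform (c • x) y = (starRingEnd ℂ) c * hform x y := by
  simp only [hform_apply, Pi.smul_apply, smul_eq_mul, _root_.map_mul, Finset.mul_sum, mul_assoc]

lemma hform_smul_right {n : ℕ} (c : ℂ) (x y : Idx n → ℂ) :
    hform x (c • y) = c * hform x y := by
  simp only [hform_apply, Pi.smul_apply, smul_eq_mul, Finset.mul_sum, mul_left_comm]

lemma hform_sub_left {n : ℕ} (x x' y : Idx n → ℂ) :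
    hform (x - x') y = hform x y - hform x' y := by
  simp [hform_apply, sub_mul, Finset.sum_sub_distrib]

lemma hform_sub_right {n : ℕ} (x y y' : Idx n → ℂ) :
    hform x (y - y') = hform x y - hform x y' := by
  simp [hform_apply, mul_sub, Finset.sum_sub_distrib]

lemma hform_sum_left {n : ℕ} {ι : Type*} (s : Finset ι) (f : ι → Idx n → ℂ) (y : Idx n → ℂ) :
    hform (∑ i ∈ s, f i) y = ∑ i ∈ s, hform (f i) y := by
  classical
  induction s using Finset.induction with
  | empty => simp [hform_apply]
  | insert a s h ih => rw [Finset.sum_insert h, Finset.sum_insert h, hform_add_left, ih]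

lemma hform_sum_right {n : ℕ} {ι : Type*} (s : Finset ι) (f : ι → Idx n → ℂ) (x : Idx n → ℂ) :
    hform x (∑ i ∈ s, f i) = ∑ i ∈ s, hform x (f i) := by
  classical
  induction s using Finset.induction with
  | empty => simp [hform_apply]
  | insert a s h ih => rw [Finset.sum_insert h, Finset.sum_insert h, hform_add_right, ih]

/-- The linear map `x ↦ (fun i => hform (f i) x)`. -/
def hformPairing {n m : ℕ} (f : Fin m → Idx n → ℂ) :
    (Idx n → ℂ) →ₗ[ℂ] (Fin m → ℂ) where
  toFun x := fun i => hform (f i) x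
  map_add' x y := by funext i; simp [hform_add_right]
  map_smul' c x := by funext i; simp [hform_smul_right]

lemma hform_J_self {n : ℕ} (z : Idx n → ℂ) :
    hform z (Jmat n *ᵥ z) = ∑ k, (starRingEnd ℂ) (z k) * z k := by
  rw [hform_apply]
  apply Finset.sum_congr rfl
  intro k _
  rw [Jmat_mulVec]
  simp [sw_sw]

lemma hform_J_self_ne {n : ℕ} (z : Idx n → ℂ) (hz : z ≠ 0) :
    hform z (Jmat n *ᵥ z) ≠ 0 := by
  rw [hform_J_self]
  have : ∀ k, (starRingEnd ℂ) (z k) * z k = ((Complex.normSq (z k) : ℝ) : ℂ) := by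
    intro k; rw [Complex.normSq_eq_conj_mul_self]
  simp only [this]
  rw [← Complex.ofReal_sum]
  norm_cast
  intro h
  apply hz
  funext k
  have := (Finset.sum_eq_zero_iff_of_nonneg (fun k _ => Complex.normSq_nonneg (z k))).1 h k
    (Finset.mem_univ k)
  exact Complex.normSq_eq_zero.1 this

lemma hform_J {n : ℕ} (x y : Idx n → ℂ) :
    hform x (Jmat n *ᵥ y) = star x ⬝ᵥ y := by
  rw [hform_apply]
  apply Finset.sum_congr rfl
  intro k _
  rw [Jmat_mulVec]
  simp [sw_sw]

lemma exists_dual {n m : ℕ} (v : Fin m → Idx n → ℂ) (hv : LinearIndependent ℂ v) :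
    ∃ w' : Fin m → Idx n → ℂ, ∀ i j, hform (v i) (w' j) = if i = j then 1 else 0 := by
  classical
  set M : Matrix (Fin m) (Fin m) ℂ := Matrix.of (fun i j => star (v i) ⬝ᵥ v j) with hM
  have key : ∀ (x : Idx n → ℂ) (c : Fin m → ℂ),
      star x ⬝ᵥ (∑ j, c j • v j) = ∑ j, c j * (star x ⬝ᵥ v j) := by
    intro x c
    simp only [dotProduct, Finset.sum_apply, Pi.smul_apply, smul_eq_mul, Finset.mul_sum]
    rw [Finset.sum_comm]
    apply Finset.sum_congr rfl
    intro j _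
    apply Finset.sum_congr rfl
    intro k _
    simp [Pi.star_apply, mul_comm, mul_left_comm, mul_assoc]
  have hdet : IsUnit M.det := by
    rw [isUnit_iff_ne_zero]
    intro h
    obtain ⟨c, hc0, hc⟩ := (Matrix.exists_mulVec_eq_zero_iff).2 h
    set z : Idx n → ℂ := ∑ j, c j • v j with hz
    have hzne : z ≠ 0 := by
      intro h0
      apply hc0
      funext j
      exact (Fintype.linearIndependent_iff.1 hv) c (by rw [← hz, h0]) j
    have hvz : ∀ i, hform (v i) (Jmat n *ᵥ z) = 0 := by
      intro i
      rw [hform_J, hz, key]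
      have : (M *ᵥ c) i = 0 := by rw [hc]; rfl
      rw [← this]
      simp [Matrix.mulVec, dotProduct, hM, mul_comm]
    have hzz : hform z (Jmat n *ᵥ z) = 0 := by
      rw [hz, hform_sum_left]
      apply Finset.sum_eq_zero
      intro j _
      rw [hform_smul_left, ← hz, hvz j, mul_zero]
    exact hform_J_self_ne z hzne hzz
  refine ⟨fun j => ∑ k, (M⁻¹ k j) • (Jmat n *ᵥ v k), ?_⟩
  intro i j
  rw [hform_sum_right]
  have : ∀ k, hform (v i) ((M⁻¹ k j) • (Jmat n *ᵥ v k)) = M i k * M⁻¹ k j := by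
    intro k
    rw [hform_smul_right, hform_J]
    simp [hM]
    ring
  simp only [this]
  rw [← Matrix.mul_apply, Matrix.mul_nonsing_inv M hdet, Matrix.one_apply]

lemma correct_w {n m : ℕ} (v w' : Fin m → Idx n → ℂ)
    (hvv : ∀ i j, hform (v i) (v j) = 0)
    (hvw' : ∀ i j, hform (v i) (w' j) = if i = j then 1 else 0) :
    ∃ w : Fin m → Idx n → ℂ,
      (∀ i j, hform (v i) (w j) = if i = j then 1 else 0) ∧
      (∀ i j, hform (w i) (w j) = 0) := by
  classical
  set A : Fin m → Fin m → ℂ := fun j k => hform (w' j) (w' k) with hA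
  set S : Fin m → Idx n → ℂ := fun j => ∑ k, ((starRingEnd ℂ) (A j k) / 2) • v k with hS
  have hw'v : ∀ j k, hform (w' j) (v k) = if k = j then 1 else 0 := by
    intro j k
    rw [← hform_conj, hvw' k j]
    split <;> simp
  have hvS : ∀ i j, hform (v i) (S j) = 0 := by
    intro i j
    rw [hS, hform_sum_right]
    apply Finset.sum_eq_zero
    intro k _
    rw [hform_smul_right, hvv i k, mul_zero]
  have hw'S : ∀ j l, hform (w' j) (S l) = (starRingEnd ℂ) (A l j) / 2 := by
    intro j l
    rw [hS, hform_sum_right]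
    simp only [hform_smul_right, hw'v, mul_ite, mul_one, mul_zero]
    simp [Finset.sum_ite_eq']
  have hSw' : ∀ j l, hform (S j) (w' l) = A j l / 2 := by
    intro j l
    rw [hS, hform_sum_left]
    simp only [hform_smul_left, hvw', mul_ite, mul_one, mul_zero, map_div₀,
      Complex.conj_conj]
    have h2 : (starRingEnd ℂ) 2 = 2 := by norm_num [Complex.ext_iff]
    simp [h2, Finset.sum_ite_eq']
  have hSS : ∀ j l, hform (S j) (S l) = 0 := by
    intro j l
    rw [hS, hform_sum_left]
    apply Finset.sum_eq_zero
    intro k _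
    rw [hform_smul_left, ← hS, hvS k l, mul_zero]
  refine ⟨fun j => w' j - S j, ?_, ?_⟩
  · intro i j
    rw [hform_sub_right, hvS i j, hvw' i j, sub_zero]
  · intro i j
    have hAc : (starRingEnd ℂ) (A j i) = A i j := hform_conj _ _
    rw [hform_sub_left, hform_sub_right, hform_sub_right, hw'S, hSw', hSS, hAc]
    ring

lemma hform_zero_left {n : ℕ} (y : Idx n → ℂ) : hform 0 y = 0 := by
  simp [hform_apply]

lemma hform_zero_right {n : ℕ} (x : Idx n → ℂ) : hform x 0 = 0 := by
  simp [hform_apply]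

lemma hform_conj_zero {n : ℕ} {x y : Idx n → ℂ} (h : hform x y = 0) : hform y x = 0 := by
  rw [← hform_conj, h, map_zero]

lemma finrank_fun_Idx (n : ℕ) : Module.finrank ℂ (Idx n → ℂ) = 2 * n + 1 := by
  rw [Module.finrank_fintype_fun_eq_card]
  simp [Fintype.card_sum]
  ring

/-- The pairing linear map `x ↦ (fun i => hform (f i) x)`. -/
def hPair {n : ℕ} {ι : Type} [Fintype ι] (f : ι → Idx n → ℂ) :
    (Idx n → ℂ) →ₗ[ℂ] (ι → ℂ) where
  toFun x := fun i => hform (f i) x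
  map_add' x y := by funext i; simp [hform_add_right]
  map_smul' c x := by funext i; simp [hform_smul_right]

lemma exists_orth {n : ℕ} (v w : Fin n → Idx n → ℂ) :
    ∃ u' : Idx n → ℂ, u' ≠ 0 ∧ (∀ i, hform (v i) u' = 0) ∧ (∀ i, hform (w i) u' = 0) := by
  classical
  set f : Fin n ⊕ Fin n → Idx n → ℂ := Sum.elim v w with hf
  have hker : LinearMap.ker (hPair f) ≠ ⊥ := by
    intro h
    have h1 := LinearMap.finrank_range_add_finrank_ker (hPair f)
    rw [h, finrank_bot, add_zero, finrank_fun_Idx] at h1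
    have h2 : Module.finrank ℂ (LinearMap.range (hPair f)) ≤ 2 * n := by
      have := Submodule.finrank_le (LinearMap.range (hPair f))
      rwa [Module.finrank_fintype_fun_eq_card, Fintype.card_sum, Fintype.card_fin,
        ← two_mul] at this
    omega
  obtain ⟨u', hu'mem, hu'ne⟩ := Submodule.exists_mem_ne_zero_of_ne_bot hker
  have : ∀ i, hform (f i) u' = 0 := by
    intro i
    have := LinearMap.mem_ker.1 hu'mem
    exact congrFun this i
  exact ⟨u', hu'ne, fun i => this (Sum.inl i), fun i => this (Sum.inr i)⟩

lemma hform_lincomb {n : ℕ} {ι : Type} [Fintype ι] (c d : ι → ℂ) (f g : ι → Idx n → ℂ) :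
    hform (∑ i, c i • f i) (∑ j, d j • g j)
      = ∑ i, ∑ j, (starRingEnd ℂ) (c i) * d j * hform (f i) (g j) := by
  rw [hform_sum_left]
  apply Finset.sum_congr rfl
  intro i _
  rw [hform_smul_left, hform_sum_right, Finset.mul_sum]
  apply Finset.sum_congr rfl
  intro j _
  rw [hform_smul_right]
  ring

lemma indep_total {n : ℕ} (v w : Fin n → Idx n → ℂ) (u : Idx n → ℂ)
    (hvv : ∀ i j, hform (v i) (v j) = 0)
    (hvw : ∀ i j, hform (v i) (w j) = if i = j then 1 else 0)
    (hww : ∀ i j, hform (w i) (w j) = 0)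
    (hvu : ∀ i, hform (v i) u = 0)
    (hwu : ∀ i, hform (w i) u = 0)
    (hune : u ≠ 0) :
    LinearIndependent ℂ (Sum.elim v (Sum.elim w (fun _ : Fin 1 => u))) := by
  classical
  have hwv : ∀ i j, hform (w i) (v j) = if j = i then 1 else 0 := by
    intro i j
    rw [← hform_conj, hvw j i]
    split <;> simp
  rw [Fintype.linearIndependent_iff]
  intro g hg
  set F := Sum.elim v (Sum.elim w fun _ : Fin 1 => u) with hF
  have hpair : ∀ x : Idx n → ℂ, hform x (∑ i, g i • F i) = ∑ i, g i * hform x (F i) := by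
    intro x
    rw [hform_sum_right]
    exact Finset.sum_congr rfl fun i _ => hform_smul_right _ _ _
  have hb : ∀ j, g (Sum.inr (Sum.inl j)) = 0 := by
    intro j
    have h0 : hform (v j) (∑ i, g i • F i) = 0 := by rw [hg, hform_zero_right]
    rw [hpair, Fintype.sum_sum_type, Fintype.sum_sum_type] at h0
    simpa [hF, hvv, hvw, hvu, mul_ite, Finset.sum_ite_eq] using h0
  have ha : ∀ j, g (Sum.inl j) = 0 := by
    intro j
    have h0 : hform (w j) (∑ i, g i • F i) = 0 := by rw [hg, hform_zero_right]
    rw [hpair, Fintype.sum_sum_type, Fintype.sum_sum_type] at h0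
    simpa [hF, hww, hwv, hwu, mul_ite, Finset.sum_ite_eq'] using h0
  have hc : g (Sum.inr (Sum.inr 0)) = 0 := by
    have : (∑ i, g i • F i) = g (Sum.inr (Sum.inr 0)) • u := by
      rw [Fintype.sum_sum_type, Fintype.sum_sum_type]
      simp [hF, ha, hb]
    rw [hg] at this
    rcases smul_eq_zero.1 this.symm with h | h
    · exact h
    · exact absurd h hune
  intro i
  rcases i with i | i | i
  · exact ha i
  · exact hb i
  · rw [Fin.fin_one_eq_zero i]; exact hc

def Lmap (n : ℕ) : (Idx n → ℂ) →ₗ[ℂ] (Fin n → ℂ) where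
  toFun x := fun i => x (Sum.inl i) - x (Sum.inr (Sum.inr i))
  map_add' x y := by funext i; simp; ring
  map_smul' c x := by funext i; simp [mul_sub]

lemma finrank_ker_Lmap (n : ℕ) : Module.finrank ℂ (LinearMap.ker (Lmap n)) = n + 1 := by
  have hsurj : LinearMap.range (Lmap n) = ⊤ := by
    rw [LinearMap.range_eq_top]
    intro c
    refine ⟨Sum.elim c 0, ?_⟩
    funext i
    simp [Lmap]
  have h1 := LinearMap.finrank_range_add_finrank_ker (Lmap n)
  rw [hsurj, finrank_top, finrank_fun_Idx, Module.finrank_fintype_fun_eq_card,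
    Fintype.card_fin] at h1
  omega

lemma hform_nonneg_of_mem_ker {n : ℕ} (x : Idx n → ℂ) (hx : x ∈ LinearMap.ker (Lmap n)) :
    0 ≤ (hform x x).re := by
  have hx' : ∀ i, x (Sum.inl i) = x (Sum.inr (Sum.inr i)) := by
    intro i
    have := congrFun (LinearMap.mem_ker.1 hx) i
    simpa [Lmap, sub_eq_zero] using this
  have key : hform x x = (((∑ a, Complex.normSq (x (Sum.inl a))) * 2
      + Complex.normSq (x (Sum.inr (Sum.inl 0))) : ℝ) : ℂ) := by
    rw [hform_apply]
    simp only [Fintype.sum_sum_type, Fin.sum_univ_one]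
    simp only [sw, Sum.elim_inl, Sum.elim_inr, Function.comp]
    push_cast
    simp only [Complex.normSq_eq_conj_mul_self]
    have h1 : ∀ a : Fin n, (starRingEnd ℂ) (x (Sum.inr (Sum.inr a))) * x (Sum.inl a)
        = (starRingEnd ℂ) (x (Sum.inl a)) * x (Sum.inl a) := by
      intro a; rw [← hx' a]
    have h2 : ∀ a : Fin n, (starRingEnd ℂ) (x (Sum.inl a)) * x (Sum.inr (Sum.inr a))
        = (starRingEnd ℂ) (x (Sum.inl a)) * x (Sum.inl a) := by
      intro a; rw [← hx' a]
    rw [Finset.sum_congr rfl (fun a _ => h1 a), Finset.sum_congr rfl (fun a _ => h2 a)]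
    ring
  rw [key, Complex.ofReal_re]
  have hs : 0 ≤ ∑ a, Complex.normSq (x (Sum.inl a)) :=
    Finset.sum_nonneg fun a _ => Complex.normSq_nonneg _
  have h0 := Complex.normSq_nonneg (x (Sum.inr (Sum.inl 0)))
  linarith

/-- an adapted pseudo-unitary basis for an `n`-dimensional
`𝕁`-isotropic subspace `V` of `ℂ^(2n+1)`. -/
theorem exists_adapted_basis (n : ℕ) (hn : 1 ≤ n)
    (V : Submodule ℂ (Idx n → ℂ))
    (hVrk : Module.finrank ℂ V = n) (hV : IsIsotropic V) :
    ∃ (v w : Fin n → Idx n → ℂ) (u : Idx n → ℂ),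
      (∀ i, v i ∈ V) ∧ LinearIndependent ℂ v ∧
      Submodule.span ℂ (Set.range v) = V ∧
      LinearIndependent ℂ (Sum.elim v (Sum.elim w (fun _ : Fin 1 => u))) ∧
      Submodule.span ℂ (Set.range (Sum.elim v (Sum.elim w (fun _ : Fin 1 => u)))) = ⊤ ∧
      (∀ i j, hform (v i) (v j) = 0) ∧
      (∀ i j, hform (v i) (w j) = if i = j then 1 else 0) ∧
      (∀ i j, hform (w i) (w j) = 0) ∧
      (∀ i, hform (v i) u = 0) ∧
      (∀ i, hform (w i) u = 0) ∧
      hform u u = 1 := by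
  classical
  -- Step 1: a basis of V
  let b : Module.Basis (Fin n) ℂ V := Module.finBasisOfFinrankEq ℂ V hVrk
  set v : Fin n → Idx n → ℂ := fun i => (b i : Idx n → ℂ) with hvdef
  have hvV : ∀ i, v i ∈ V := fun i => (b i).2
  have hvind : LinearIndependent ℂ v :=
    b.linearIndependent.map' V.subtype (Submodule.ker_subtype V)
  have hvspan : Submodule.span ℂ (Set.range v) = V := by
    have h1 : Set.range v = V.subtype '' Set.range b := by
      rw [← Set.range_comp]; rfl
    rw [h1, ← Submodule.map_span, b.span_eq, Submodule.map_top, Submodule.range_subtype]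
  have hvv : ∀ i j, hform (v i) (v j) = 0 := fun i j => hV _ (hvV i) _ (hvV j)
  -- Step 2: dual family and correction
  obtain ⟨w', hvw'⟩ := exists_dual v hvind
  obtain ⟨w, hvw, hww⟩ := correct_w v w' hvv hvw'
  have hwv : ∀ i j, hform (w i) (v j) = if j = i then 1 else 0 := by
    intro i j
    rw [← hform_conj, hvw j i]
    split <;> simp
  -- Step 3: orthogonal vector
  obtain ⟨u', hu'ne, hvu', hwu'⟩ := exists_orth v w
  set lam : ℂ := hform u' u' with hlam
  have hu'v : ∀ i, hform u' (v i) = 0 := fun i => hform_conj_zero (hvu' i)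
  have hu'w : ∀ i, hform u' (w i) = 0 := fun i => hform_conj_zero (hwu' i)
  have hindT : LinearIndependent ℂ (Sum.elim v (Sum.elim w (fun _ : Fin 1 => u'))) :=
    indep_total v w u' hvv hvw hww hvu' hwu' hu'ne
  have hcard : Fintype.card (Fin n ⊕ Fin n ⊕ Fin 1) = Module.finrank ℂ (Idx n → ℂ) := by
    rw [finrank_fun_Idx]
    simp [Fintype.card_sum]
    ring
  have hspanT : Submodule.span ℂ
      (Set.range (Sum.elim v (Sum.elim w (fun _ : Fin 1 => u')))) = ⊤ :=
    hindT.span_eq_top_of_card_eq_finrank hcard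
  -- lam is real
  have hconjlam : (starRingEnd ℂ) lam = lam := hform_conj u' u'
  have him : lam.im = 0 := by
    have := congrArg Complex.im hconjlam
    rw [Complex.conj_im] at this
    linarith
  have hlam_re : lam = ((lam.re : ℝ) : ℂ) := by
    apply Complex.ext <;> simp [him]
  -- lam ≠ 0
  have hlam_ne : lam ≠ 0 := by
    intro h0
    have hall : ∀ x : Idx n → ℂ, hform x u' = 0 := by
      intro x
      have hx : x ∈ Submodule.span ℂ
          (Set.range (Sum.elim v (Sum.elim w (fun _ : Fin 1 => u')))) := by
        rw [hspanT]; trivial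
      obtain ⟨c, hc⟩ := (Submodule.mem_span_range_iff_exists_fun ℂ).1 hx
      rw [← hc, hform_sum_left]
      apply Finset.sum_eq_zero
      intro i _
      rw [hform_smul_left]
      rcases i with i | i | i
      · rw [Sum.elim_inl, hvu' i, mul_zero]
      · simp only [Sum.elim_inr, Sum.elim_inl]
        rw [hwu' i, mul_zero]
      · simp only [Sum.elim_inr]
        rw [← hlam, h0, mul_zero]
    have h1 : hform (Jmat n *ᵥ u') u' = 0 := hall _
    rw [← hform_conj] at h1
    have h2 : hform u' (Jmat n *ᵥ u') = 0 := by
      have := congrArg (starRingEnd ℂ) h1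
      rwa [Complex.conj_conj, map_zero] at this
    exact hform_J_self_ne u' hu'ne h2
  -- lam is positive
  have hlam_pos : 0 < lam.re := by
    rcases lt_trichotomy lam.re 0 with hneg | hzero | hpos
    · -- contradiction via negative/nonnegative subspaces
      exfalso
      set yfam : Fin n ⊕ Fin 1 → Idx n → ℂ :=
        Sum.elim (fun i => v i - w i) (fun _ : Fin 1 => u') with hyfam
      -- Gram values
      have hGll : ∀ i j : Fin n, hform (yfam (Sum.inl i)) (yfam (Sum.inl j))
          = if i = j then -2 else 0 := by
        intro i j
        simp only [hyfam, Sum.elim_inl]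
        rw [hform_sub_left, hform_sub_right, hform_sub_right, hvv, hvw, hww, hwv]
        split
        · subst ‹i = j›; norm_num
        · have : ¬ j = i := fun h => ‹¬ i = j› h.symm
          simp [this, ‹¬ i = j›]
      have hGlr : ∀ (i : Fin n) (b : Fin 1),
          hform (yfam (Sum.inl i)) (yfam (Sum.inr b)) = 0 := by
        intro i c
        simp only [hyfam, Sum.elim_inl, Sum.elim_inr]
        rw [hform_sub_left, hvu' i, hwu' i, sub_zero]
      have hGrl : ∀ (b : Fin 1) (j : Fin n),
          hform (yfam (Sum.inr b)) (yfam (Sum.inl j)) = 0 := by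
        intro c j
        simp only [hyfam, Sum.elim_inl, Sum.elim_inr]
        rw [hform_sub_right, hu'v j, hu'w j, sub_zero]
      have hGrr : ∀ b c : Fin 1, hform (yfam (Sum.inr b)) (yfam (Sum.inr c)) = lam := by
        intro b c
        simp only [hyfam, Sum.elim_inr]
        exact hlam.symm
      -- linear independence of yfam
      have hyind : LinearIndependent ℂ yfam := by
        rw [Fintype.linearIndependent_iff]
        intro g hg
        have hpair : ∀ x : Idx n → ℂ,
            hform x (∑ i, g i • yfam i) = ∑ i, g i * hform x (yfam i) := by
          intro x
          rw [hform_sum_right]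
          exact Finset.sum_congr rfl fun i _ => hform_smul_right _ _ _
        have ha : ∀ j, g (Sum.inl j) = 0 := by
          intro j
          have h0 : hform (w j) (∑ i, g i • yfam i) = 0 := by rw [hg, hform_zero_right]
          rw [hpair, Fintype.sum_sum_type, Fin.sum_univ_one] at h0
          have hwy : ∀ i, hform (w j) (yfam (Sum.inl i)) = if i = j then 1 else 0 := by
            intro i
            simp only [hyfam, Sum.elim_inl]
            rw [hform_sub_right, hwv, hww, sub_zero]
          simp only [hwy] at h0
          simp only [hwy, hyfam, Sum.elim_inr, hwu' j, mul_zero, add_zero, mul_ite,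
            mul_one, Finset.sum_ite_eq', Finset.mem_univ, if_true] at h0
          exact h0
        have hc : g (Sum.inr 0) = 0 := by
          have hz : (∑ i, g i • yfam i) = g (Sum.inr 0) • u' := by
            rw [Fintype.sum_sum_type, Fin.sum_univ_one]
            simp [ha, hyfam]
          rw [hg] at hz
          rcases smul_eq_zero.1 hz.symm with h | h
          · exact h
          · exact absurd h hu'ne
        intro i
        rcases i with i | i
        · exact ha i
        · rw [Fin.fin_one_eq_zero i]; exact hc
      -- N = span yfam
      set N : Submodule ℂ (Idx n → ℂ) := Submodule.span ℂ (Set.range yfam) with hN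
      have hNrank : Module.finrank ℂ N = n + 1 := by
        rw [hN, finrank_span_eq_card hyind]
        simp [Fintype.card_sum]
      have hNneg : ∀ z ∈ N, z ≠ 0 → (hform z z).re < 0 := by
        intro z hz hzne
        obtain ⟨c, hc⟩ := (Submodule.mem_span_range_iff_exists_fun ℂ).1 hz
        have hcne : c ≠ 0 := by
          intro h0
          apply hzne
          rw [← hc, h0]
          simp
        have hzz : hform z z = ((-2 : ℝ) : ℂ) * ((∑ i, Complex.normSq (c (Sum.inl i)) : ℝ) : ℂ)
            + ((Complex.normSq (c (Sum.inr 0)) : ℝ) : ℂ) * lam := by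
          rw [← hc, hform_lincomb]
          rw [Fintype.sum_sum_type]
          have hinl : ∀ i : Fin n, (∑ j, (starRingEnd ℂ) (c (Sum.inl i)) * c j
              * hform (yfam (Sum.inl i)) (yfam j))
              = (starRingEnd ℂ) (c (Sum.inl i)) * c (Sum.inl i) * (-2) := by
            intro i
            rw [Fintype.sum_sum_type, Fin.sum_univ_one]
            simp only [hGll, hGlr, mul_ite, mul_zero, mul_neg, Finset.sum_ite_eq,
              Finset.sum_ite_eq', Finset.mem_univ, if_true, Finset.sum_const_zero, add_zero]
            try ring
          have hinr : ∀ b : Fin 1, (∑ j, (starRingEnd ℂ) (c (Sum.inr b)) * c j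
              * hform (yfam (Sum.inr b)) (yfam j))
              = (starRingEnd ℂ) (c (Sum.inr b)) * c (Sum.inr b) * lam := by
            intro bb
            rw [Fintype.sum_sum_type, Fin.sum_univ_one]
            simp only [hGrl, hGrr, mul_zero, Finset.sum_const_zero, zero_add]
            rw [Fin.fin_one_eq_zero bb]
          rw [Finset.sum_congr rfl (fun i _ => hinl i), Fin.sum_univ_one, hinr 0]
          push_cast [Complex.normSq_eq_conj_mul_self]
          rw [← Finset.sum_mul]
          ring
        have hre : (hform z z).re = (-2) * (∑ i, Complex.normSq (c (Sum.inl i)))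
            + Complex.normSq (c (Sum.inr 0)) * lam.re := by
          rw [hzz]
          simp [Complex.add_re, Complex.re_ofReal_mul]
        rw [hre]
        have hS : 0 ≤ ∑ i, Complex.normSq (c (Sum.inl i)) :=
          Finset.sum_nonneg fun i _ => Complex.normSq_nonneg _
        have h2 : Complex.normSq (c (Sum.inr 0)) * lam.re ≤ 0 :=
          mul_nonpos_of_nonneg_of_nonpos (Complex.normSq_nonneg _) (le_of_lt hneg)
        rcases Classical.em (∃ i, c (Sum.inl i) ≠ 0) with ⟨i0, hi0⟩ | hnone
        · have : 0 < Complex.normSq (c (Sum.inl i0)) := Complex.normSq_pos.2 hi0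
          have hlt : 0 < ∑ i, Complex.normSq (c (Sum.inl i)) :=
            Finset.sum_pos' (fun i _ => Complex.normSq_nonneg _) ⟨i0, Finset.mem_univ _, this⟩
          linarith
        · push_neg at hnone
          have he : c (Sum.inr 0) ≠ 0 := by
            intro h0
            apply hcne
            funext i
            rcases i with i | i
            · exact hnone i
            · rw [Fin.fin_one_eq_zero i]; exact h0
          have : 0 < Complex.normSq (c (Sum.inr 0)) := Complex.normSq_pos.2 he
          nlinarith
      -- P = ker Lmap
      have hdisj : N ⊓ LinearMap.ker (Lmap n) = ⊥ := by
        rw [Submodule.eq_bot_iff]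
        intro x hx
        by_contra hxne
        have h1 := hNneg x hx.1 hxne
        have h2 := hform_nonneg_of_mem_ker x hx.2
        linarith
      have hsum := Submodule.finrank_sup_add_finrank_inf_eq N (LinearMap.ker (Lmap n))
      rw [hdisj, finrank_bot, hNrank, finrank_ker_Lmap] at hsum
      have hle : Module.finrank ℂ ↥(N ⊔ LinearMap.ker (Lmap n)) ≤ 2 * n + 1 := by
        have := Submodule.finrank_le (N ⊔ LinearMap.ker (Lmap n))
        rwa [finrank_fun_Idx] at this
      omega
    · exfalso
      apply hlam_ne
      rw [hlam_re, hzero]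
      simp
    · exact hpos
  -- Step 4: normalize u
  set s : ℝ := (Real.sqrt lam.re)⁻¹ with hs
  set u : Idx n → ℂ := ((s : ℝ) : ℂ) • u' with hu
  have hvu : ∀ i, hform (v i) u = 0 := by
    intro i
    rw [hu, hform_smul_right, hvu' i, mul_zero]
  have hwu : ∀ i, hform (w i) u = 0 := by
    intro i
    rw [hu, hform_smul_right, hwu' i, mul_zero]
  have huu : hform u u = 1 := by
    have hsqrt_ne : Real.sqrt lam.re ≠ 0 := ne_of_gt (Real.sqrt_pos.2 hlam_pos)
    rw [hu, hform_smul_right, hform_smul_left, ← hlam, Complex.conj_ofReal, hlam_re, hs]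
    norm_cast
    field_simp
    rw [Real.sq_sqrt hlam_pos.le]
  have hune : u ≠ 0 := by
    intro h0
    rw [h0] at huu
    rw [hform_zero_right] at huu
    exact zero_ne_one huu
  have hind : LinearIndependent ℂ (Sum.elim v (Sum.elim w (fun _ : Fin 1 => u))) :=
    indep_total v w u hvv hvw hww hvu hwu hune
  have hspan : Submodule.span ℂ
      (Set.range (Sum.elim v (Sum.elim w (fun _ : Fin 1 => u)))) = ⊤ :=
    hind.span_eq_top_of_card_eq_finrank hcard
  exact ⟨v, w, u, hvV, hvind, hvspan, hind, hspan, hvv, hvw, hww, hvu, hwu, huu⟩
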